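/- If G is a star consisting of one center node adjacent to n leaf nodes (and no other edges), then CIM_G is a simplex of dimension 2^n − n − 1. -/

import Mathlib

open Classical

/-- A DAG on vertex type `V`: a directed graph (adjacency relation) with no directed cycles. -/
structure DAG (V : Type) where
  adj : V → V → Prop
  acyclic : ∀ v, ¬ Relation.TransGen adj v v

namespace DAG

variable {V : Type}

/-- The skeleton of a DAG: the undirected graph obtained by forgetting directions. -/
def skeleton (D : DAG V) : SimpleGraph V where
  Adj i j := D.adj i j ∨ D.adj j i
  symm := by refine ⟨?_⟩; intro i j h; exact h.symm
  loopless := by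
    refine ⟨?_⟩
    intro i h
    rcases h with h | h <;> exact D.acyclic i (Relation.TransGen.single h)

/-- The characteristic imset of a DAG, as a vector indexed by finite vertex sets
(coordinates on sets of size `< 2` are identically zero). -/
noncomputable def imset (D : DAG V) (S : Finset V) : ℝ :=
  if 2 ≤ S.card ∧ ∃ i ∈ S, ∀ j ∈ S, j ≠ i → D.adj j i then 1 else 0

/-- `D.IsVStructure i j k` means `i → j ← k` is an induced subgraph of `D`
(`i` and `k` non-adjacent). -/
def IsVStructure (D : DAG V) (i j k : V) : Prop :=
  i ≠ k ∧ D.adj i j ∧ D.adj k j ∧ ¬ D.adj i k ∧ ¬ D.adj k i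

end DAG

/-- Two DAGs are Markov equivalent iff they have the same skeleton and the same
v-structures. -/
def MarkovEquiv {V : Type} (D E : DAG V) : Prop :=
  D.skeleton = E.skeleton ∧ ∀ i j k, D.IsVStructure i j k ↔ E.IsVStructure i j k

/-- An arrow `i → j` of `D` is essential if it occurs in every DAG Markov equivalent to `D`. -/
def DAG.Essential {V : Type} (D : DAG V) (i j : V) : Prop :=
  D.adj i j ∧ ∀ E : DAG V, MarkovEquiv D E → E.adj i j

/-- The characteristic imset polytope of an undirected graph `G`: the convex hull of the
characteristic imsets of all DAGs with skeleton `G`. -/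
noncomputable def CIM {V : Type} (G : SimpleGraph V) : Set (Finset V → ℝ) :=
  convexHull ℝ { f | ∃ D : DAG V, D.skeleton = G ∧ f = D.imset }

/-- `conv(u,v)` is an edge (one-dimensional face) of `P`: there is a linear functional whose
maximum over `P` is attained exactly on the segment from `u` to `v`. -/
def IsPolytopeEdge {E : Type*} [AddCommGroup E] [Module ℝ E] (P : Set E) (u v : E) : Prop :=
  u ≠ v ∧ ∃ φ : E →ₗ[ℝ] ℝ, (∀ x ∈ P, φ x ≤ φ u) ∧ ∀ x ∈ P, (φ x = φ u ↔ x ∈ segment ℝ u v)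

/-- `P` is a simplex of dimension `d`: the convex hull of `d+1` affinely independent points. -/
def IsSimplexOfDim {E : Type*} [AddCommGroup E] [Module ℝ E] (P : Set E) (d : ℕ) : Prop :=
  ∃ pts : Fin (d + 1) → E, AffineIndependent ℝ pts ∧ P = convexHull ℝ (Set.range pts)

/-- The standard basis vector indexed by `S`. -/
noncomputable def eVec {V : Type} (S : Finset V) : Finset V → ℝ :=
  fun T => if T = S then 1 else 0

/-- The star graph with center `none` and the `n` leaves `some a`, `a : Fin n`. -/
def starGraph (n : ℕ) : SimpleGraph (Option (Fin n)) where
  Adj i j := (i = none ∧ j ≠ none) ∨ (j = none ∧ i ≠ none)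
  symm := by refine ⟨?_⟩; rintro i j (⟨h1, h2⟩ | ⟨h1, h2⟩)
             · exact Or.inr ⟨h1, h2⟩
             · exact Or.inl ⟨h1, h2⟩
  loopless := by refine ⟨?_⟩; rintro i (⟨h1, h2⟩ | ⟨h1, h2⟩) <;> exact h2 h1

namespace CimStar

/-- Explicit form of the characteristic imset of the star DAG where exactly the
leaves in `A` point toward the center. -/
noncomputable def g (n : ℕ) (A : Finset (Fin n)) : Finset (Option (Fin n)) → ℝ :=
  fun S => if (∃ a : Fin n, S = {none, some a}) ∨
      (2 ≤ S.card ∧ none ∈ S ∧ S.erase none ⊆ A.image some) then 1 else 0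

lemma imset_eq {n : ℕ} (D : DAG (Option (Fin n))) (h : D.skeleton = starGraph n) :
    D.imset = g n (Finset.univ.filter fun a => D.adj (some a) none) := by
  have hadj : ∀ i j, D.adj i j → (i = none ∧ j ≠ none) ∨ (j = none ∧ i ≠ none) := by
    intro i j hij
    have hs : D.skeleton.Adj i j := Or.inl hij
    rw [h] at hs; exact hs
  have hstar : ∀ a : Fin n, D.adj (some a) none ∨ D.adj none (some a) := by
    intro a
    have hs : D.skeleton.Adj (some a) none := by
      rw [h]; exact Or.inr ⟨rfl, by simp⟩
    exact hs
  funext S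
  unfold DAG.imset g
  have hiff : (2 ≤ S.card ∧ ∃ i ∈ S, ∀ j ∈ S, j ≠ i → D.adj j i) ↔
      ((∃ a : Fin n, S = {none, some a}) ∨
        (2 ≤ S.card ∧ none ∈ S ∧ S.erase none ⊆
          (Finset.univ.filter fun a => D.adj (some a) none).image some)) := by
    constructor
    · rintro ⟨hc, i, hiS, hall⟩
      cases i with
      | none =>
        right
        refine ⟨hc, hiS, ?_⟩
        intro j hj
        have hjS := Finset.mem_of_mem_erase hj
        have hjne := Finset.ne_of_mem_erase hj
        have hadjj := hall j hjS hjne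
        cases j with
        | none => exact absurd rfl hjne
        | some a =>
          exact Finset.mem_image.mpr ⟨a, Finset.mem_filter.mpr ⟨Finset.mem_univ a, hadjj⟩, rfl⟩
      | some a =>
        left
        refine ⟨a, ?_⟩
        have hsub : S ⊆ {none, some a} := by
          intro j hjS
          by_cases hj : j = some a
          · simp [hj]
          · rcases hadj j (some a) (hall j hjS hj) with ⟨h1, _⟩ | ⟨h1, _⟩
            · simp [h1]
            · exact absurd h1 (by simp)
        have hcard2 : ({none, some a} : Finset (Option (Fin n))).card = 2 :=
          Finset.card_pair (by simp)
        exact Finset.eq_of_subset_of_card_le hsub (by rw [hcard2]; exact hc)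
    · rintro (⟨a, rfl⟩ | ⟨hc, hnS, hsub⟩)
      · refine ⟨by rw [Finset.card_pair (by simp)], ?_⟩
        rcases hstar a with h1 | h1
        · refine ⟨none, by simp, ?_⟩
          intro j hjS hjne
          rcases Finset.mem_insert.mp hjS with h2 | h2
          · exact absurd h2 hjne
          · rw [Finset.mem_singleton.mp h2]; exact h1
        · refine ⟨some a, by simp, ?_⟩
          intro j hjS hjne
          rcases Finset.mem_insert.mp hjS with h2 | h2
          · rw [h2]; exact h1
          · exact absurd (Finset.mem_singleton.mp h2) hjne
      · refine ⟨hc, none, hnS, ?_⟩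
        intro j hjS hjne
        have hj : j ∈ S.erase none := Finset.mem_erase.mpr ⟨hjne, hjS⟩
        obtain ⟨a, ha, rfl⟩ := Finset.mem_image.mp (hsub hj)
        exact (Finset.mem_filter.mp ha).2
  simp only [hiff]

/-- The star adjacency relation determined by the inward-leaf set `A`. -/
def sadj {n : ℕ} (A : Finset (Fin n)) (i j : Option (Fin n)) : Prop :=
  (∃ a ∈ A, i = some a ∧ j = none) ∨ (∃ a, a ∉ A ∧ i = none ∧ j = some a)

lemma sadj_trans {n : ℕ} (A : Finset (Fin n)) {v w : Option (Fin n)}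
    (hvw : Relation.TransGen (sadj A) v w) :
    sadj A v w ∨ ∃ a b, v = some a ∧ w = some b ∧ a ∈ A ∧ b ∉ A := by
  induction hvw with
  | single h => exact Or.inl h
  | tail _ hlast ih =>
    rcases ih with (⟨a, ha, hv, rfl⟩ | ⟨a, ha, hv, rfl⟩) | ⟨a, b, hv, rfl, ha, hb⟩
    · rcases hlast with ⟨b, hb, h1, h2⟩ | ⟨b, hb, h1, h2⟩
      · exact absurd h1 (by simp)
      · exact Or.inr ⟨a, b, hv, h2, ha, hb⟩
    · rcases hlast with ⟨b, hb, h1, h2⟩ | ⟨b, hb, h1, h2⟩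
      · exact absurd (Option.some_injective _ h1 ▸ hb) (by simpa using ha)
      · exact absurd h1 (by simp)
    · rcases hlast with ⟨c, hc, h1, h2⟩ | ⟨c, hc, h1, h2⟩
      · exact absurd (Option.some_injective _ h1 ▸ hc) (by simpa using hb)
      · exact absurd h1 (by simp)

/-- The DAG with star skeleton in which exactly the leaves in `A` point inward. -/
def DA {n : ℕ} (A : Finset (Fin n)) : DAG (Option (Fin n)) where
  adj := sadj A
  acyclic := by
    intro v htg
    rcases sadj_trans A htg with (⟨a, _, h1, h2⟩ | ⟨a, _, h1, h2⟩) | ⟨a, b, h1, h2, ha, hb⟩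
    · rw [h1] at h2; exact absurd h2 (by simp)
    · rw [h1] at h2; exact absurd h2 (by simp)
    · rw [h1] at h2
      exact hb (Option.some_injective _ h2 ▸ ha)

lemma DA_skeleton {n : ℕ} (A : Finset (Fin n)) : (DA A).skeleton = starGraph n := by
  ext i j
  show sadj A i j ∨ sadj A j i ↔ (i = none ∧ j ≠ none) ∨ (j = none ∧ i ≠ none)
  constructor
  · rintro (h | h) <;>
      rcases h with ⟨a, _, h1, h2⟩ | ⟨a, _, h1, h2⟩ <;> subst h1 <;> subst h2 <;> simp
  · rintro (⟨h1, h2⟩ | ⟨h1, h2⟩)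
    · subst h1
      cases j with
      | none => exact absurd rfl h2
      | some a =>
        by_cases ha : a ∈ A
        · exact Or.inr (Or.inl ⟨a, ha, rfl, rfl⟩)
        · exact Or.inl (Or.inr ⟨a, ha, rfl, rfl⟩)
    · subst h1
      cases i with
      | none => exact absurd rfl h2
      | some a =>
        by_cases ha : a ∈ A
        · exact Or.inl (Or.inl ⟨a, ha, rfl, rfl⟩)
        · exact Or.inr (Or.inr ⟨a, ha, rfl, rfl⟩)

lemma DA_filter {n : ℕ} (A : Finset (Fin n)) :
    (Finset.univ.filter fun a => (DA A).adj (some a) none) = A := by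
  ext a
  simp only [Finset.mem_filter, Finset.mem_univ, true_and]
  constructor
  · rintro (⟨b, hb, h1, _⟩ | ⟨b, _, h1, _⟩)
    · exact Option.some_injective _ h1 ▸ hb
    · exact absurd h1 (by simp)
  · intro ha
    exact Or.inl ⟨a, ha, rfl, rfl⟩

lemma g_card_le_one {n : ℕ} {A : Finset (Fin n)} (hA : A.card ≤ 1) : g n A = g n ∅ := by
  funext S
  unfold g
  have key : ∀ B : Finset (Fin n), B.card ≤ 1 →
      ((2 ≤ S.card ∧ none ∈ S ∧ S.erase none ⊆ B.image some) →
        ∃ a : Fin n, S = {none, some a}) := by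
    intro B hB ⟨hc, hn, hsub⟩
    have h1 : 1 ≤ (S.erase none).card := by
      rw [Finset.card_erase_of_mem hn]; omega
    have h2 : (S.erase none).card ≤ 1 :=
      le_trans (Finset.card_le_card hsub) (le_trans Finset.card_image_le hB)
    obtain ⟨x, hx⟩ := Finset.card_eq_one.mp (le_antisymm h2 h1)
    have hxmem : x ∈ B.image some := hsub (hx ▸ Finset.mem_singleton_self x)
    obtain ⟨a, _, rfl⟩ := Finset.mem_image.mp hxmem
    refine ⟨a, ?_⟩
    rw [← Finset.insert_erase hn, hx]
  have hiff : ((∃ a : Fin n, S = {none, some a}) ∨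
        (2 ≤ S.card ∧ none ∈ S ∧ S.erase none ⊆ A.image some)) ↔
      ((∃ a : Fin n, S = {none, some a}) ∨
        (2 ≤ S.card ∧ none ∈ S ∧ S.erase none ⊆ (∅ : Finset (Fin n)).image some)) := by
    constructor
    · rintro (h | h)
      · exact Or.inl h
      · exact Or.inl (key A hA h)
    · rintro (h | h)
      · exact Or.inl h
      · exact Or.inl (key ∅ (by simp) h)
  simp only [hiff]

lemma g_eval {n : ℕ} {A B : Finset (Fin n)} (hA : 2 ≤ A.card) :
    g n B (insert none (A.image some)) = if A ⊆ B then 1 else 0 := by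
  have hnone : (none : Option (Fin n)) ∉ A.image some := by simp
  have hcard : (insert none (A.image some)).card = A.card + 1 := by
    rw [Finset.card_insert_of_notMem hnone,
      Finset.card_image_of_injective _ (Option.some_injective _)]
  have herase : (insert none (A.image some)).erase none = A.image some :=
    Finset.erase_insert hnone
  have hleft : ¬ ∃ a : Fin n, insert none (A.image some) = {none, some a} := by
    rintro ⟨a, ha⟩
    have hc := congrArg Finset.card ha
    rw [hcard, Finset.card_pair (by simp)] at hc
    omega
  unfold g
  by_cases hAB : A ⊆ B
  · rw [if_pos hAB, if_pos]
    right
    exact ⟨by omega, Finset.mem_insert_self _ _,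
      by rw [herase]; exact Finset.image_subset_image hAB⟩
  · rw [if_neg hAB, if_neg]
    rintro (h | ⟨_, _, hsub⟩)
    · exact hleft h
    · rw [herase] at hsub
      exact hAB ((Finset.image_subset_image_iff (Option.some_injective _)).mp hsub)

lemma g_eval_empty {n : ℕ} {A : Finset (Fin n)} (hA : 2 ≤ A.card) :
    g n ∅ (insert none (A.image some)) = 0 := by
  rw [g_eval hA, if_neg]
  intro h
  rw [Finset.subset_empty.mp h] at hA
  simp at hA

/-- Index type: subsets of cardinality `≠ 1`. -/
def K (n : ℕ) : Type := {A : Finset (Fin n) // A.card ≠ 1}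

noncomputable instance (n : ℕ) : Fintype (K n) := by
  unfold K; exact Subtype.fintype _

lemma gen_set (n : ℕ) :
    {f | ∃ D : DAG (Option (Fin n)), D.skeleton = starGraph n ∧ f = D.imset}
      = Set.range (fun A : K n => g n A.1) := by
  ext f
  constructor
  · rintro ⟨D, hD, rfl⟩
    rw [imset_eq D hD]
    set A0 := Finset.univ.filter fun a => D.adj (some a) none with hA0
    by_cases h : A0.card = 1
    · exact ⟨⟨∅, by simp⟩, (g_card_le_one (le_of_eq h)).symm⟩
    · exact ⟨⟨A0, h⟩, rfl⟩
  · rintro ⟨⟨A, hA⟩, rfl⟩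
    exact ⟨DA A, DA_skeleton A, by rw [imset_eq _ (DA_skeleton A), DA_filter]⟩

lemma card_K (n : ℕ) : Fintype.card (K n) = 2 ^ n - n := by
  have h1 : Fintype.card {A : Finset (Fin n) // A.card = 1} = n := by
    rw [Fintype.card_subtype]
    have : (Finset.univ.filter fun A : Finset (Fin n) => A.card = 1)
        = Finset.univ.image (fun a : Fin n => ({a} : Finset (Fin n))) := by
      ext A
      simp only [Finset.mem_filter, Finset.mem_univ, true_and, Finset.mem_image,
        Finset.card_eq_one]
      constructor
      · rintro ⟨a, rfl⟩; exact ⟨a, rfl⟩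
      · rintro ⟨a, rfl⟩; exact ⟨a, rfl⟩
    rw [this, Finset.card_image_of_injective _ Finset.singleton_injective,
      Finset.card_univ, Fintype.card_fin]
  have h2 : Fintype.card (K n) = Fintype.card (Finset (Fin n)) -
      Fintype.card {A : Finset (Fin n) // A.card = 1} :=
    Fintype.card_subtype_compl _
  rw [h2, h1, Fintype.card_finset, Fintype.card_fin]

/-- The base point of `K n`. -/
def K0 (n : ℕ) : K n := ⟨∅, by simp⟩

lemma ai (n : ℕ) : AffineIndependent ℝ (fun A : K n => g n A.1) := by
  rw [affineIndependent_iff_linearIndependent_vsub ℝ _ (K0 n)]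
  rw [linearIndependent_iff']
  intro s c hsum i hi
  have hcard2 : ∀ j : {x : K n // x ≠ K0 n}, 2 ≤ j.1.1.card := by
    intro j
    have h1 : j.1.1.card ≠ 1 := j.1.2
    have h2 : j.1.1.card ≠ 0 := by
      intro h0
      apply j.2
      apply Subtype.ext
      show j.1.1 = (∅ : Finset (Fin n))
      exact Finset.card_eq_zero.mp h0
    omega
  have hinj : ∀ j k : {x : K n // x ≠ K0 n}, j.1.1 = k.1.1 → j = k := by
    intro j k h
    exact Subtype.ext (Subtype.ext h)
  -- key evaluation: summing coordinate at insert none (A.image some)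
  have key : ∀ j : {x : K n // x ≠ K0 n}, j ∈ s →
      (∑ k ∈ s.filter (fun k => j.1.1 ⊆ k.1.1), c k) = 0 := by
    intro j hj
    have h0 := congrFun hsum (insert none (j.1.1.image some))
    simp only [Finset.sum_apply, Pi.smul_apply, vsub_eq_sub, Pi.sub_apply, smul_eq_mul,
      Pi.zero_apply] at h0
    have hrw : ∀ k ∈ s, c k * (g n k.1.1 (insert none (j.1.1.image some)) -
        g n ((K0 n) : K n).1 (insert none (j.1.1.image some)))
        = if j.1.1 ⊆ k.1.1 then c k else 0 := by
      intro k _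
      show c k * (g n k.1.1 (insert none (j.1.1.image some)) -
        g n (∅ : Finset (Fin n)) (insert none (j.1.1.image some))) = _
      rw [g_eval (hcard2 j), g_eval_empty (hcard2 j), sub_zero]
      by_cases hs : j.1.1 ⊆ k.1.1
      · rw [if_pos hs, if_pos hs, mul_one]
      · rw [if_neg hs, if_neg hs, mul_zero]
    rw [Finset.sum_congr rfl hrw] at h0
    rw [Finset.sum_filter]
    exact h0
  -- downward induction on n - card
  have main : ∀ m : ℕ, ∀ j : {x : K n // x ≠ K0 n}, j ∈ s →
      n - j.1.1.card < m → c j = 0 := by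
    intro m
    induction m with
    | zero => intro j _ h; omega
    | succ m IH =>
      intro j hj hlt
      have hk0 := key j hj
      have hsingle : ∑ k ∈ s.filter (fun k => j.1.1 ⊆ k.1.1), c k = c j := by
        have hjmem : j ∈ s.filter (fun k => j.1.1 ⊆ k.1.1) :=
          Finset.mem_filter.mpr ⟨hj, subset_rfl⟩
        apply Finset.sum_eq_single_of_mem j hjmem
        intro k hk hkj
        obtain ⟨hks, hsub⟩ := Finset.mem_filter.mp hk
        have hne : j.1.1 ≠ k.1.1 := fun h => hkj (hinj k j h.symm)
        have hlt2 : j.1.1.card < k.1.1.card :=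
          Finset.card_lt_card (lt_of_le_of_ne hsub hne)
        have hle : k.1.1.card ≤ n := by
          have := Finset.card_le_univ k.1.1
          rwa [Fintype.card_fin] at this
        exact IH k hks (by omega)
      rw [hsingle] at hk0
      exact hk0
  exact main (n + 1) i hi (by omega)

end CimStar

/-- **CIM of a star is a simplex.**  If `G` is a star with one center adjacent to `n` leaves
(and no other edges), then `CIM_G` is a simplex of dimension `2^n - n - 1`. -/
theorem cim_star_simplex (n : ℕ) :
    IsSimplexOfDim (CIM (starGraph n)) (2 ^ n - n - 1) := by
  classical
  have hlt : n < 2 ^ n := Nat.lt_two_pow_self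
  have hcard : Fintype.card (CimStar.K n) = 2 ^ n - n - 1 + 1 := by
    rw [CimStar.card_K]; omega
  let e : Fin (2 ^ n - n - 1 + 1) ≃ CimStar.K n := (Fintype.equivFinOfCardEq hcard).symm
  refine ⟨(fun A : CimStar.K n => CimStar.g n A.1) ∘ e, ?_, ?_⟩
  · exact (CimStar.ai n).comp_embedding e.toEmbedding
  · unfold CIM
    rw [CimStar.gen_set n]
    congr 1
    rw [Set.range_comp, Equiv.range_eq_univ, Set.image_univ]
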